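/- Let V be a nonzero finite-dimensional real vector space and T : V → V a real-linear map with no real eigenvalues (for every λ ∈ ℝ, T - λ·id is injective). Then there exists a unique real-linear map J : V → V such that J ∘ J = -id, J ∘ T = T ∘ J, and for every λ ∈ ℂ and every nonzero z ∈ ℂ ⊗[ℝ] V with T_ℂ z = λ·z and J_ℂ z = i·z, the imaginary part of λ is positive. -/

import Mathlib

open TensorProduct

section Aux

variable {V : Type*} [AddCommGroup V] [Module ℝ V]

noncomputable def cconj : ℂ ⊗[ℝ] V →ₗ[ℝ] ℂ ⊗[ℝ] V :=
  TensorProduct.map Complex.conjAe.toLinearMap LinearMap.id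

@[simp] lemma cconj_tmul (c : ℂ) (v : V) :
    cconj (c ⊗ₜ[ℝ] v) = (starRingEnd ℂ) c ⊗ₜ[ℝ] v := rfl

@[simp] lemma cconj_cconj (z : ℂ ⊗[ℝ] V) : cconj (cconj z) = z := by
  induction z using TensorProduct.induction_on with
  | zero => simp
  | tmul c v => simp
  | add x y hx hy => simp [map_add, hx, hy]

lemma cconj_smul (c : ℂ) (z : ℂ ⊗[ℝ] V) :
    cconj (c • z) = (starRingEnd ℂ) c • cconj z := by
  induction z using TensorProduct.induction_on with
  | zero => simp
  | tmul a v => rw [smul_tmul', cconj_tmul, cconj_tmul, smul_tmul']; simp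
  | add x y hx hy => simp [smul_add, map_add, hx, hy]

lemma cconj_baseChange (f : V →ₗ[ℝ] V) (z : ℂ ⊗[ℝ] V) :
    cconj (f.baseChange ℂ z) = f.baseChange ℂ (cconj z) := by
  induction z using TensorProduct.induction_on with
  | zero => simp
  | tmul a v => simp
  | add x y hx hy => simp [map_add, hx, hy]

noncomputable def reT : ℂ ⊗[ℝ] V →ₗ[ℝ] V :=
  TensorProduct.lift ((LinearMap.lsmul ℝ V) ∘ₗ Complex.reLm)

@[simp] lemma reT_tmul (c : ℂ) (v : V) : reT (c ⊗ₜ[ℝ] v) = c.re • v := rfl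

@[simp] lemma reT_one_tmul (v : V) : reT ((1:ℂ) ⊗ₜ[ℝ] v) = v := by simp

lemma smul_one_tmul (c : ℂ) (v : V) : c • ((1:ℂ) ⊗ₜ[ℝ] v) = c ⊗ₜ[ℝ] v := by
  rw [smul_tmul']; simp

lemma one_tmul_injective : Function.Injective (fun v : V => (1:ℂ) ⊗ₜ[ℝ] v) := by
  intro a b h
  have : reT ((1:ℂ) ⊗ₜ[ℝ] a) = reT ((1:ℂ) ⊗ₜ[ℝ] b) := by
    simp only at h; rw [h]
  simpa using this

lemma two_smul_reT (z : ℂ ⊗[ℝ] V) :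
    (2:ℂ) • ((1:ℂ) ⊗ₜ[ℝ] reT z) = z + cconj z := by
  induction z using TensorProduct.induction_on with
  | zero => simp
  | tmul c v =>
    rw [reT_tmul, cconj_tmul, tmul_smul]
    rw [← algebraMap_smul ℂ (c.re) ((1:ℂ) ⊗ₜ[ℝ] v), smul_smul, smul_one_tmul]
    rw [← add_tmul]
    congr 1
    rw [Complex.add_conj]
    simp [Complex.coe_algebraMap]
  | add x y hx hy =>
    rw [map_add, map_add, tmul_add, smul_add, hx, hy]
    abel

lemma eq_one_tmul_reT {z : ℂ ⊗[ℝ] V} (h : cconj z = z) :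
    (1:ℂ) ⊗ₜ[ℝ] reT z = z := by
  have h2 := two_smul_reT z
  rw [h, ← two_smul ℂ z] at h2
  exact smul_right_injective _ (by norm_num : (2:ℂ) ≠ 0) h2

lemma baseChange_unique {f : V →ₗ[ℝ] V} {g : ℂ ⊗[ℝ] V →ₗ[ℂ] ℂ ⊗[ℝ] V}
    (h : ∀ v : V, g ((1:ℂ) ⊗ₜ[ℝ] v) = (1:ℂ) ⊗ₜ[ℝ] f v) (z : ℂ ⊗[ℝ] V) :
    g z = f.baseChange ℂ z := by
  induction z using TensorProduct.induction_on with
  | zero => simp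
  | tmul c v =>
    rw [← smul_one_tmul, map_smul, map_smul, h, LinearMap.baseChange_tmul, ← smul_one_tmul]
  | add x y hx hy => simp [map_add, hx, hy]

lemma indep_sum_eq_zero {R M ι : Type*} [Ring R] [AddCommGroup M] [Module R M]
    {t : ι → Submodule R M} (ht : iSupIndep t) {F : Finset ι} {f : ι → M}
    (hf : ∀ i, f i ∈ t i) (h : ∑ i ∈ F, f i = 0) : ∀ i ∈ F, f i = 0 := by
  classical
  intro i hi
  have hsum : f i = -∑ j ∈ F.erase i, f j := by
    have h2 := Finset.add_sum_erase F f hi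
    rw [h] at h2
    exact eq_neg_of_add_eq_zero_left h2
  have hmem : -∑ j ∈ F.erase i, f j ∈ ⨆ (j) (_ : j ≠ i), t j := by
    apply neg_mem
    apply Submodule.sum_mem
    intro j hj
    have hji : j ≠ i := Finset.ne_of_mem_erase hj
    exact Submodule.mem_iSup_of_mem j (Submodule.mem_iSup_of_mem hji (hf j))
  have : f i ∈ t i ⊓ ⨆ (j) (_ : j ≠ i), t j := ⟨hf i, hsum ▸ hmem⟩
  have hd := (iSupIndep_def.mp ht i).le_bot
  exact hd this

lemma indep_disjoint_biSup {R M ι : Type*} [Ring R] [AddCommGroup M] [Module R M]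
    {t : ι → Submodule R M} (ht : iSupIndep t) {s u : Set ι}
    (hsu : ∀ i, i ∈ s → i ∈ u → False) :
    Disjoint (⨆ i ∈ s, t i) (⨆ i ∈ u, t i) := by
  classical
  rw [Submodule.disjoint_def]
  intro x hxs hxu
  have hxs' : x ∈ ⨆ i, ⨆ (_ : i ∈ s), t i := hxs
  have hxu' : x ∈ ⨆ i, ⨆ (_ : i ∈ u), t i := hxu
  rw [Submodule.mem_iSup_iff_exists_finsupp] at hxs' hxu'
  obtain ⟨f, hf, hfx⟩ := hxs'
  obtain ⟨g, hg, hgx⟩ := hxu'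
  have hf' : ∀ i, f i ∈ t i ∧ (i ∉ s → f i = 0) := by
    intro i
    by_cases hi : i ∈ s
    · have := hf i; rw [iSup_pos hi] at this; exact ⟨this, fun h => absurd hi h⟩
    · have := hf i
      rw [iSup_neg hi] at this
      simp only [Submodule.mem_bot] at this
      exact ⟨this ▸ Submodule.zero_mem _, fun _ => this⟩
  have hg' : ∀ i, g i ∈ t i ∧ (i ∉ u → g i = 0) := by
    intro i
    by_cases hi : i ∈ u
    · have := hg i; rw [iSup_pos hi] at this; exact ⟨this, fun h => absurd hi h⟩
    · have := hg i
      rw [iSup_neg hi] at this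
      simp only [Submodule.mem_bot] at this
      exact ⟨this ▸ Submodule.zero_mem _, fun _ => this⟩
  set F := f.support ∪ g.support with hF
  have h1 : ∑ i ∈ F, f i = x := by
    rw [← hfx, Finsupp.sum]
    exact (Finset.sum_subset Finset.subset_union_left (fun i _ hi => by simpa using hi)).symm
  have h2 : ∑ i ∈ F, g i = x := by
    rw [← hgx, Finsupp.sum]
    exact (Finset.sum_subset Finset.subset_union_right (fun i _ hi => by simpa using hi)).symm
  have hsum : ∑ i ∈ F, (f i - g i) = 0 := by
    rw [Finset.sum_sub_distrib, h1, h2, sub_self]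
  have hz := indep_sum_eq_zero ht (f := fun i => f i - g i)
    (fun i => Submodule.sub_mem _ (hf' i).1 (hg' i).1) hsum
  have hfg : ∀ i, f i = g i := by
    intro i
    by_cases hi : i ∈ F
    · exact sub_eq_zero.mp (hz i hi)
    · simp only [hF, Finset.mem_union, Finsupp.mem_support_iff, not_or, not_not] at hi
      rw [hi.1, hi.2]
  have hfz : ∀ i, f i = 0 := by
    intro i
    by_cases hi : i ∈ s
    · rw [hfg i]; exact (hg' i).2 (fun hiu => hsu i hi hiu)
    · exact (hf' i).2 hi
  rw [← hfx]
  rw [Finsupp.sum]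
  exact Finset.sum_eq_zero fun i _ => hfz i

lemma baseChange_injective {f : V →ₗ[ℝ] V} (hf : Function.Injective f) :
    Function.Injective (f.baseChange ℂ) := by
  rw [LinearMap.baseChange_eq_ltensor]
  exact Module.Flat.lTensor_preserves_injective_linearMap f hf

section TPart

variable (T : V →ₗ[ℝ] V)

local notation "Tc" => (LinearMap.baseChange ℂ T : Module.End ℂ (ℂ ⊗[ℝ] V))

lemma cconj_sub_apply (μ : ℂ) (z : ℂ ⊗[ℝ] V) :
    cconj ((Tc - μ • (1 : Module.End ℂ (ℂ ⊗[ℝ] V))) z)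
      = (Tc - (starRingEnd ℂ) μ • (1 : Module.End ℂ (ℂ ⊗[ℝ] V))) (cconj z) := by
  simp only [LinearMap.sub_apply, LinearMap.smul_apply, Module.End.one_apply, map_sub,
    cconj_smul, cconj_baseChange]

lemma cconj_pow_sub_apply (μ : ℂ) (k : ℕ) (z : ℂ ⊗[ℝ] V) :
    cconj (((Tc - μ • (1 : Module.End ℂ (ℂ ⊗[ℝ] V)))^k) z)
      = ((Tc - (starRingEnd ℂ) μ • (1 : Module.End ℂ (ℂ ⊗[ℝ] V)))^k) (cconj z) := by
  induction k generalizing z with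
  | zero => simp
  | succ k ih =>
    rw [pow_succ', pow_succ']
    rw [Module.End.mul_apply, Module.End.mul_apply, cconj_sub_apply, ih]

lemma cconj_mem_maxGen {μ : ℂ} {z : ℂ ⊗[ℝ] V}
    (hz : z ∈ Module.End.maxGenEigenspace Tc μ) :
    cconj z ∈ Module.End.maxGenEigenspace Tc ((starRingEnd ℂ) μ) := by
  rw [Module.End.mem_maxGenEigenspace] at hz ⊢
  obtain ⟨k, hk⟩ := hz
  exact ⟨k, by rw [← cconj_pow_sub_apply, hk, map_zero]⟩

lemma real_maxGen_bot
    (hT : ∀ lam : ℝ, Function.Injective (T - lam • (LinearMap.id : V →ₗ[ℝ] V)))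
    {μ : ℂ} (hμ : μ.im = 0) :
    Module.End.maxGenEigenspace Tc μ = ⊥ := by
  have hbc : ∀ z : ℂ ⊗[ℝ] V,
      (Tc - μ • (1 : Module.End ℂ (ℂ ⊗[ℝ] V))) z
        = (T - μ.re • (LinearMap.id : V →ₗ[ℝ] V)).baseChange ℂ z := by
    apply baseChange_unique
    intro v
    simp only [LinearMap.sub_apply, LinearMap.smul_apply, Module.End.one_apply,
      LinearMap.baseChange_tmul, LinearMap.id_apply]
    rw [tmul_sub, tmul_smul, ← algebraMap_smul ℂ (μ.re) ((1:ℂ) ⊗ₜ[ℝ] v)]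
    congr 2
    rw [show (algebraMap ℝ ℂ) μ.re = (μ.re : ℂ) from rfl]
    exact Complex.ext (by simp) (by simp [hμ])
  have hinj : Function.Injective (Tc - μ • (1 : Module.End ℂ (ℂ ⊗[ℝ] V))) := by
    intro a b hab
    have := baseChange_injective (hT μ.re)
    apply this
    rw [← hbc, ← hbc, hab]
  have hki : ∀ k : ℕ, Function.Injective
      (((Tc - μ • (1 : Module.End ℂ (ℂ ⊗[ℝ] V)))^k : Module.End ℂ (ℂ ⊗[ℝ] V))) := by
    intro k
    induction k with
    | zero => simpa [Module.End.one_eq_id] using Function.injective_id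
    | succ k ih =>
      rw [pow_succ, Module.End.mul_eq_comp, LinearMap.coe_comp]
      exact Function.Injective.comp ih hinj
  rw [eq_bot_iff]
  intro z hz
  rw [Module.End.mem_maxGenEigenspace] at hz
  obtain ⟨k, hk⟩ := hz
  simpa using (hki k) (by simpa using hk)

lemma biSup_induction {R M ι : Type*} [Ring R] [AddCommGroup M] [Module R M]
    (p : ι → Submodule R M) (s : Set ι) {C : M → Prop} {x : M}
    (hx : x ∈ ⨆ i ∈ s, p i) (mem : ∀ i ∈ s, ∀ y ∈ p i, C y) (zero : C 0)
    (add : ∀ y z, C y → C z → C (y + z)) : C x := by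
  have hx' : x ∈ ⨆ i, ⨆ (_ : i ∈ s), p i := hx
  refine Submodule.iSup_induction (motive := C) (fun i => ⨆ (_ : i ∈ s), p i) hx' ?_ zero add
  intro i y hy
  change y ∈ ⨆ (_ : i ∈ s), p i at hy
  by_cases hi : i ∈ s
  · rw [iSup_pos hi] at hy
    exact mem i hi y hy
  · rw [iSup_neg hi] at hy
    simp only [Submodule.mem_bot] at hy
    rw [hy]
    exact zero

noncomputable def posSpace : Submodule ℂ (ℂ ⊗[ℝ] V) :=
  ⨆ μ ∈ {μ : ℂ | 0 < μ.im}, Module.End.maxGenEigenspace Tc μ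

noncomputable def negSpace : Submodule ℂ (ℂ ⊗[ℝ] V) :=
  ⨆ μ ∈ {μ : ℂ | μ.im < 0}, Module.End.maxGenEigenspace Tc μ

lemma maxGen_le_posSpace {μ : ℂ} (hμ : 0 < μ.im) :
    Module.End.maxGenEigenspace Tc μ ≤ posSpace T := by
  intro x hx
  exact Submodule.mem_iSup_of_mem μ (Submodule.mem_iSup_of_mem hμ hx)

lemma maxGen_le_negSpace {μ : ℂ} (hμ : μ.im < 0) :
    Module.End.maxGenEigenspace Tc μ ≤ negSpace T := by
  intro x hx
  exact Submodule.mem_iSup_of_mem μ (Submodule.mem_iSup_of_mem hμ hx)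

lemma disjoint_pos_neg : Disjoint (posSpace T) (negSpace T) := by
  apply indep_disjoint_biSup (Module.End.independent_maxGenEigenspace Tc)
  intro μ h1 h2
  simp only [Set.mem_setOf_eq] at h1 h2
  linarith

lemma pos_sup_neg [FiniteDimensional ℝ V]
    (hT : ∀ lam : ℝ, Function.Injective (T - lam • (LinearMap.id : V →ₗ[ℝ] V))) :
    posSpace T ⊔ negSpace T = ⊤ := by
  rw [← top_le_iff, ← Module.End.iSup_maxGenEigenspace_eq_top Tc]
  apply iSup_le
  intro μ
  rcases lt_trichotomy μ.im 0 with h | h | h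
  · exact le_trans (maxGen_le_negSpace T h) le_sup_right
  · rw [real_maxGen_bot T hT h]
    exact bot_le
  · exact le_trans (maxGen_le_posSpace T h) le_sup_left

lemma mapsTo_posSpace {x : ℂ ⊗[ℝ] V} (hx : x ∈ posSpace T) : Tc x ∈ posSpace T := by
  refine biSup_induction (C := fun y => Tc y ∈ posSpace T) _ _ hx ?_ (by simp) ?_
  · intro μ hμ y hy
    refine maxGen_le_posSpace T hμ ?_
    simpa using Module.End.mapsTo_maxGenEigenspace_of_comm (Commute.refl Tc) μ hy
  · intro y z hy hz
    rw [map_add]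
    exact Submodule.add_mem _ hy hz

lemma mapsTo_negSpace {x : ℂ ⊗[ℝ] V} (hx : x ∈ negSpace T) : Tc x ∈ negSpace T := by
  refine biSup_induction (C := fun y => Tc y ∈ negSpace T) _ _ hx ?_ (by simp) ?_
  · intro μ hμ y hy
    refine maxGen_le_negSpace T hμ ?_
    simpa using Module.End.mapsTo_maxGenEigenspace_of_comm (Commute.refl Tc) μ hy
  · intro y z hy hz
    rw [map_add]
    exact Submodule.add_mem _ hy hz

lemma cconj_posSpace {x : ℂ ⊗[ℝ] V} (hx : x ∈ posSpace T) : cconj x ∈ negSpace T := by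
  refine biSup_induction (C := fun y => cconj y ∈ negSpace T) _ _ hx ?_ (by simp) ?_
  · intro μ hμ y hy
    refine maxGen_le_negSpace T ?_ (cconj_mem_maxGen T hy)
    simpa using hμ
  · intro y z hy hz
    rw [map_add]
    exact Submodule.add_mem _ hy hz

lemma cconj_negSpace {x : ℂ ⊗[ℝ] V} (hx : x ∈ negSpace T) : cconj x ∈ posSpace T := by
  refine biSup_induction (C := fun y => cconj y ∈ posSpace T) _ _ hx ?_ (by simp) ?_
  · intro μ hμ y hy
    refine maxGen_le_posSpace T ?_ (cconj_mem_maxGen T hy)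
    simp only [Set.mem_setOf_eq] at hμ ⊢
    simpa using hμ
  · intro y z hy hz
    rw [map_add]
    exact Submodule.add_mem _ hy hz

end TPart

section JC

variable {W : Type*} [AddCommGroup W] [Module ℂ W] (P N : Submodule ℂ W) (h : IsCompl P N)

noncomputable def Jof : W →ₗ[ℂ] W :=
  Complex.I • (P.subtype ∘ₗ Submodule.linearProjOfIsCompl P N h)
    - Complex.I • (N.subtype ∘ₗ Submodule.linearProjOfIsCompl N P h.symm)

lemma Jof_apply (z : W) :
    Jof P N h z = Complex.I • (Submodule.linearProjOfIsCompl P N h z : W)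
      - Complex.I • (Submodule.linearProjOfIsCompl N P h.symm z : W) := rfl

lemma Jof_apply_left {x : W} (hx : x ∈ P) : Jof P N h x = Complex.I • x := by
  rw [Jof_apply]
  rw [show Submodule.linearProjOfIsCompl P N h x = ⟨x, hx⟩ from
    Submodule.linearProjOfIsCompl_apply_left h ⟨x, hx⟩,
    show Submodule.linearProjOfIsCompl N P h.symm x = 0 from
      Submodule.linearProjOfIsCompl_apply_right' h.symm hx]
  simp

lemma Jof_apply_right {x : W} (hx : x ∈ N) : Jof P N h x = -(Complex.I • x) := by
  rw [Jof_apply]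
  rw [show Submodule.linearProjOfIsCompl N P h.symm x = ⟨x, hx⟩ from
    Submodule.linearProjOfIsCompl_apply_left h.symm ⟨x, hx⟩,
    show Submodule.linearProjOfIsCompl P N h x = 0 from
      Submodule.linearProjOfIsCompl_apply_right' h hx]
  simp

lemma proj_decomp (z : W) :
    ((Submodule.linearProjOfIsCompl P N h z : W), (Submodule.linearProjOfIsCompl N P h.symm z : W)).1
      + ((Submodule.linearProjOfIsCompl P N h z : W), (Submodule.linearProjOfIsCompl N P h.symm z : W)).2 = z :=
  Submodule.projection_add_projection_eq_self h z

lemma Jof_Jof (z : W) : Jof P N h (Jof P N h z) = -z := by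
  set p := (Submodule.linearProjOfIsCompl P N h z : W)
  set n := (Submodule.linearProjOfIsCompl N P h.symm z : W)
  have hp : p ∈ P := (Submodule.linearProjOfIsCompl P N h z).2
  have hn : n ∈ N := (Submodule.linearProjOfIsCompl N P h.symm z).2
  have hz : p + n = z := proj_decomp P N h z
  rw [← hz, map_add, Jof_apply_left P N h hp, Jof_apply_right P N h hn, map_add, map_neg,
    map_smul, map_smul, Jof_apply_left P N h hp, Jof_apply_right P N h hn]
  rw [smul_smul, smul_neg, smul_smul, Complex.I_mul_I]
  simp
  abel

end JC

lemma le_biSup_maxGen {W : Type*} [AddCommGroup W] [Module ℂ W] [FiniteDimensional ℂ W]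
    (f : Module.End ℂ W) (p : Submodule ℂ W) (hp : ∀ x ∈ p, f x ∈ p) (s : Set ℂ)
    (hev : ∀ μ : ℂ, μ ∉ s → ∀ x ∈ p, f x = μ • x → x = 0) :
    p ≤ ⨆ μ ∈ s, Module.End.maxGenEigenspace f μ := by
  classical
  set g : Module.End ℂ ↥p := LinearMap.restrict f hp with hg
  have htop : ⨆ μ : ℂ, Module.End.maxGenEigenspace g μ = ⊤ :=
    Module.End.iSup_maxGenEigenspace_eq_top g
  have hbot : ∀ μ : ℂ, μ ∉ s → Module.End.maxGenEigenspace g μ = ⊥ := by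
    intro μ hμ
    by_contra hne
    have huev : g.HasUnifEigenvalue μ ⊤ := hne
    have hev1 : g.HasEigenvalue μ := huev.lt zero_lt_one
    obtain ⟨x, hx1, hx2⟩ := hev1.exists_hasEigenvector
    have hgx : g x = μ • x := by
      rwa [Module.End.mem_eigenspace_iff] at hx1
    have hfx : f (x : W) = μ • (x : W) := by
      have h1 : ((g x : ↥p) : W) = f (x : W) := by
        simp [hg, LinearMap.restrict_apply]
      rw [← h1, hgx]
      rfl
    have := hev μ hμ (x : W) x.2 hfx
    exact hx2 (by exact_mod_cast this)
  have hle : (⊤ : Submodule ℂ ↥p) ≤ ⨆ μ ∈ s, Module.End.maxGenEigenspace g μ := by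
    rw [← htop]
    apply iSup_le
    intro μ
    by_cases hμ : μ ∈ s
    · exact le_trans (le_refl _) (le_iSup₂ (f := fun μ _ => Module.End.maxGenEigenspace g μ) μ hμ)
    · rw [hbot μ hμ]
      exact bot_le
  intro x hx
  have hx' : (⟨x, hx⟩ : ↥p) ∈ (⊤ : Submodule ℂ ↥p) := trivial
  have hx'' := hle hx'
  have hmem : x ∈ Submodule.map p.subtype (⨆ μ ∈ s, Module.End.maxGenEigenspace g μ) :=
    ⟨⟨x, hx⟩, hx'', rfl⟩
  have hmaple : Submodule.map p.subtype (⨆ μ ∈ s, Module.End.maxGenEigenspace g μ)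
      ≤ ⨆ μ ∈ s, Module.End.maxGenEigenspace f μ := by
    rw [Submodule.map_iSup]
    apply iSup_le
    intro μ
    rw [Submodule.map_iSup]
    apply iSup_le
    intro hμ
    refine le_trans ?_ (le_iSup₂ (f := fun μ _ => Module.End.maxGenEigenspace f μ) μ hμ)
    rw [Module.End.maxGenEigenspace, Module.End.genEigenspace_restrict f p ⊤ μ hp]
    intro y hy
    obtain ⟨z, hz, rfl⟩ := hy
    exact hz
  exact hmaple hmem


end Aux

set_option maxHeartbeats 1600000 in
/-- A linear transformation `T` of a nonzero finite-dimensional real vector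
space with no real eigenvalues determines a unique complex structure `J`
commuting with `T` such that on the complexification, eigenvectors of `T`
lying in the `i`-eigenspace of `J` have eigenvalues of positive imaginary
part. -/
theorem complex_structure_of_no_real_eigenvalues
    (V : Type*) [AddCommGroup V] [Module ℝ V] [FiniteDimensional ℝ V]
    [Nontrivial V]
    (T : V →ₗ[ℝ] V)
    (hT : ∀ lam : ℝ, Function.Injective (T - lam • (LinearMap.id : V →ₗ[ℝ] V))) :
    ∃! J : V →ₗ[ℝ] V,
      J ∘ₗ J = -LinearMap.id ∧
      J ∘ₗ T = T ∘ₗ J ∧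
      ∀ (lam : ℂ) (z : ℂ ⊗[ℝ] V), z ≠ 0 →
        LinearMap.baseChange ℂ T z = lam • z →
        LinearMap.baseChange ℂ J z = Complex.I • z →
        0 < lam.im := by
  classical
  set P := posSpace T with hP
  set N := negSpace T with hN
  have hc : IsCompl P N := ⟨disjoint_pos_neg T, codisjoint_iff.mpr (pos_sup_neg T hT)⟩
  set Jc := Jof P N hc with hJcdef
  have decomp : ∀ z : ℂ ⊗[ℝ] V, ∃ p ∈ P, ∃ n ∈ N, z = p + n := by
    intro z
    exact ⟨_, (Submodule.linearProjOfIsCompl P N hc z).2, _,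
      (Submodule.linearProjOfIsCompl N P hc.symm z).2, (proj_decomp P N hc z).symm⟩
  have hJc_cconj : ∀ z, Jc (cconj z) = cconj (Jc z) := by
    intro z
    obtain ⟨p, hp, n, hn, rfl⟩ := decomp z
    have e1 : Jc (cconj (p + n)) = -(Complex.I • cconj p) + Complex.I • cconj n := by
      rw [hJcdef, map_add, map_add, Jof_apply_right P N hc (cconj_posSpace T hp),
        Jof_apply_left P N hc (cconj_negSpace T hn)]
    have e2 : cconj (Jc (p + n)) = -(Complex.I • cconj p) + Complex.I • cconj n := by
      rw [hJcdef, map_add, Jof_apply_left P N hc hp, Jof_apply_right P N hc hn, map_add, map_neg,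
        cconj_smul, cconj_smul, Complex.conj_I, neg_smul, neg_smul, neg_neg]
    exact e1.trans e2.symm
  have hJc_Tc : ∀ z, Jc (T.baseChange ℂ z) = T.baseChange ℂ (Jc z) := by
    intro z
    obtain ⟨p, hp, n, hn, rfl⟩ := decomp z
    have e1 : Jc (T.baseChange ℂ (p + n))
        = Complex.I • (T.baseChange ℂ p) + -(Complex.I • (T.baseChange ℂ n)) := by
      rw [hJcdef, map_add, map_add, Jof_apply_left P N hc (mapsTo_posSpace T hp),
        Jof_apply_right P N hc (mapsTo_negSpace T hn)]
    have e2 : T.baseChange ℂ (Jc (p + n))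
        = Complex.I • (T.baseChange ℂ p) + -(Complex.I • (T.baseChange ℂ n)) := by
      rw [hJcdef, map_add, Jof_apply_left P N hc hp, Jof_apply_right P N hc hn, map_add,
        map_neg, map_smul, map_smul]
    exact e1.trans e2.symm
  set J : V →ₗ[ℝ] V := reT ∘ₗ (Jc.restrictScalars ℝ) ∘ₗ ((TensorProduct.mk ℝ ℂ V) 1) with hJdef
  have hJv : ∀ v : V, (1:ℂ) ⊗ₜ[ℝ] (J v) = Jc ((1:ℂ) ⊗ₜ[ℝ] v) := by
    intro v
    have hfix : cconj (Jc ((1:ℂ) ⊗ₜ[ℝ] v)) = Jc ((1:ℂ) ⊗ₜ[ℝ] v) := by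
      rw [← hJc_cconj, cconj_tmul, map_one]
    have : J v = reT (Jc ((1:ℂ) ⊗ₜ[ℝ] v)) := rfl
    rw [this]
    exact eq_one_tmul_reT hfix
  have hbcJ : ∀ z, J.baseChange ℂ z = Jc z := by
    intro z
    exact (baseChange_unique (fun v => (hJv v).symm) z).symm
  have h1 : J ∘ₗ J = -LinearMap.id := by
    apply LinearMap.ext
    intro v
    apply one_tmul_injective (V := V)
    show (1:ℂ) ⊗ₜ[ℝ] (J (J v)) = (1:ℂ) ⊗ₜ[ℝ] ((-LinearMap.id : V →ₗ[ℝ] V) v)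
    rw [hJv, hJv, Jof_Jof]
    simp [tmul_neg]
  have h2 : J ∘ₗ T = T ∘ₗ J := by
    apply LinearMap.ext
    intro v
    apply one_tmul_injective (V := V)
    show (1:ℂ) ⊗ₜ[ℝ] (J (T v)) = (1:ℂ) ⊗ₜ[ℝ] (T (J v))
    rw [hJv]
    have e1 : (1:ℂ) ⊗ₜ[ℝ] (T v) = T.baseChange ℂ ((1:ℂ) ⊗ₜ[ℝ] v) := rfl
    have e2 : (1:ℂ) ⊗ₜ[ℝ] (T (J v)) = T.baseChange ℂ ((1:ℂ) ⊗ₜ[ℝ] (J v)) := rfl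
    rw [e1, e2, hJv, hJc_Tc]
  have h3 : ∀ (lam : ℂ) (z : ℂ ⊗[ℝ] V), z ≠ 0 →
      LinearMap.baseChange ℂ T z = lam • z →
      LinearMap.baseChange ℂ J z = Complex.I • z → 0 < lam.im := by
    intro lam z hz hTz hJz
    rw [hbcJ] at hJz
    obtain ⟨p, hp, n, hn, rfl⟩ := decomp z
    have heq : Complex.I • p - Complex.I • n = Complex.I • p + Complex.I • n := by
      have := hJz
      rw [hJcdef, map_add, Jof_apply_left P N hc hp, Jof_apply_right P N hc hn, smul_add] at this
      rw [← this]
      abel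
    have hneg : -(Complex.I • n) = Complex.I • n := by
      have := add_left_cancel (a := Complex.I • p)
        (by rw [← heq]; abel : Complex.I • p + -(Complex.I • n)
          = Complex.I • p + Complex.I • n)
      exact this
    have hIn : Complex.I • n + Complex.I • n = 0 := by
      nth_rewrite 1 [← hneg]
      exact neg_add_cancel _
    have hn0 : n = 0 := by
      have h2 : (2:ℂ) • (Complex.I • n) = 0 := by rw [two_smul]; exact hIn
      have h3 : Complex.I • n = 0 := by
        rcases smul_eq_zero.mp h2 with h | h
        · norm_num at h
        · exact h
      rcases smul_eq_zero.mp h3 with h | h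
      · exact absurd h Complex.I_ne_zero
      · exact h
    rw [hn0, add_zero] at hTz hz
    clear heq hneg hIn hJz
    -- now p ∈ P is an eigenvector with eigenvalue lam
    have hmem : p ∈ Module.End.maxGenEigenspace (LinearMap.baseChange ℂ T) lam := by
      rw [Module.End.mem_maxGenEigenspace]
      refine ⟨1, ?_⟩
      simp only [pow_one, LinearMap.sub_apply, LinearMap.smul_apply, Module.End.one_apply]
      rw [hTz, sub_self]
    by_contra him
    have hle : Module.End.maxGenEigenspace (LinearMap.baseChange ℂ T) lam
        ≤ ⨆ μ ∈ {μ : ℂ | ¬ 0 < μ.im}, Module.End.maxGenEigenspace (LinearMap.baseChange ℂ T) μ := by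
      intro x hx
      exact Submodule.mem_iSup_of_mem lam (Submodule.mem_iSup_of_mem him hx)
    have hdisj : Disjoint P (⨆ μ ∈ {μ : ℂ | ¬ 0 < μ.im},
        Module.End.maxGenEigenspace (LinearMap.baseChange ℂ T) μ) := by
      apply indep_disjoint_biSup
        (Module.End.independent_maxGenEigenspace (LinearMap.baseChange ℂ T))
      intro μ h1 h2
      exact h2 h1
    have := hdisj.le_bot ⟨hp, hle hmem⟩
    simp only [Submodule.mem_bot] at this
    exact hz this
  refine ⟨J, ⟨h1, h2, h3⟩, ?_⟩
  -- uniqueness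
  intro J' hJ'
  obtain ⟨h1', h2', h3'⟩ := hJ'
  set Jc' := J'.baseChange ℂ with hJc'def
  have hJc'2 : ∀ z, Jc' (Jc' z) = -z := by
    intro z
    have hcomp : (J' ∘ₗ J').baseChange ℂ z = Jc' (Jc' z) := by
      rw [LinearMap.baseChange_comp]
      rfl
    have hid : (LinearMap.id : V →ₗ[ℝ] V).baseChange ℂ z = z := by
      have h := baseChange_unique (f := (LinearMap.id : V →ₗ[ℝ] V))
        (g := (LinearMap.id : ℂ ⊗[ℝ] V →ₗ[ℂ] ℂ ⊗[ℝ] V)) (fun v => rfl) z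
      simpa using h.symm
    rw [← hcomp, h1', LinearMap.baseChange_neg, LinearMap.neg_apply, hid]
  have hJc'T : ∀ z, Jc' (T.baseChange ℂ z) = T.baseChange ℂ (Jc' z) := by
    intro z
    have hcomp : (J' ∘ₗ T).baseChange ℂ z = Jc' (T.baseChange ℂ z) := by
      rw [LinearMap.baseChange_comp]; rfl
    have hcomp2 : (T ∘ₗ J').baseChange ℂ z = T.baseChange ℂ (Jc' z) := by
      rw [LinearMap.baseChange_comp]; rfl
    rw [← hcomp, h2', hcomp2]
  set P' := LinearMap.ker (Jc' - Complex.I • (LinearMap.id : ℂ ⊗[ℝ] V →ₗ[ℂ] ℂ ⊗[ℝ] V)) with hP'def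
  set N' := LinearMap.ker (Jc' + Complex.I • (LinearMap.id : ℂ ⊗[ℝ] V →ₗ[ℂ] ℂ ⊗[ℝ] V)) with hN'def
  have hmemP' : ∀ z, z ∈ P' ↔ Jc' z = Complex.I • z := by
    intro z
    rw [hP'def, LinearMap.mem_ker, LinearMap.sub_apply, LinearMap.smul_apply, LinearMap.id_apply,
      sub_eq_zero]
  have hmemN' : ∀ z, z ∈ N' ↔ Jc' z = -(Complex.I • z) := by
    intro z
    rw [hN'def, LinearMap.mem_ker, LinearMap.add_apply, LinearMap.smul_apply, LinearMap.id_apply,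
      add_eq_zero_iff_eq_neg]
  have hP'le : P' ≤ P := by
    have := le_biSup_maxGen (LinearMap.baseChange ℂ T) P'
      (fun x hx => by
        rw [hmemP'] at hx ⊢
        show Jc' (T.baseChange ℂ x) = Complex.I • (T.baseChange ℂ x)
        rw [hJc'T, hx, map_smul])
      {μ : ℂ | 0 < μ.im}
      (fun μ hμ x hx hTx => by
        by_contra hne
        exact hμ (h3' μ x hne hTx ((hmemP' x).mp hx)))
    exact this
  have hN'le : N' ≤ N := by
    have := le_biSup_maxGen (LinearMap.baseChange ℂ T) N'
      (fun x hx => by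
        rw [hmemN'] at hx ⊢
        show Jc' (T.baseChange ℂ x) = -(Complex.I • (T.baseChange ℂ x))
        rw [hJc'T, hx, map_neg, map_smul])
      {μ : ℂ | μ.im < 0}
      (fun μ hμ x hx hTx => by
        by_contra hne
        have hy : cconj x ≠ 0 := by
          intro hcc
          apply hne
          rw [← cconj_cconj (z := x), hcc, map_zero]
        have hTy : T.baseChange ℂ (cconj x) = (starRingEnd ℂ) μ • cconj x := by
          rw [← cconj_baseChange, hTx, cconj_smul]
        have hJy : Jc' (cconj x) = Complex.I • cconj x := by
          have : Jc' (cconj x) = cconj (Jc' x) := by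
            rw [hJc'def, cconj_baseChange]
          rw [this, (hmemN' x).mp hx, map_neg, cconj_smul, Complex.conj_I, neg_smul, neg_neg]
        have := h3' ((starRingEnd ℂ) μ) (cconj x) hy hTy hJy
        simp only [Complex.conj_im] at this
        apply hμ
        simp only [Set.mem_setOf_eq]
        linarith)
    exact this
  have hsup' : ∀ z : ℂ ⊗[ℝ] V, ∃ a ∈ P', ∃ b ∈ N', z = a + b := by
    intro z
    have ha : (z - Complex.I • Jc' z) ∈ P' := by
      rw [hmemP']
      have l1 : Jc' (z - Complex.I • Jc' z) = Jc' z + Complex.I • z := by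
        rw [map_sub, map_smul, hJc'2, smul_neg, sub_neg_eq_add]
      have l2 : Complex.I • (z - Complex.I • Jc' z) = Complex.I • z + Jc' z := by
        rw [smul_sub, smul_smul, Complex.I_mul_I, neg_one_smul, sub_neg_eq_add]
      rw [l1, l2]
      abel
    have hb : (z + Complex.I • Jc' z) ∈ N' := by
      rw [hmemN']
      have l1 : Jc' (z + Complex.I • Jc' z) = Jc' z + -(Complex.I • z) := by
        rw [map_add, map_smul, hJc'2, smul_neg]
      have l2 : -(Complex.I • (z + Complex.I • Jc' z)) = -(Complex.I • z) + Jc' z := by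
        rw [smul_add, smul_smul, Complex.I_mul_I, neg_one_smul, neg_add, neg_neg]
      rw [l1, l2]
      abel
    refine ⟨(2⁻¹:ℂ) • (z - Complex.I • Jc' z), Submodule.smul_mem _ _ ha,
      (2⁻¹:ℂ) • (z + Complex.I • Jc' z), Submodule.smul_mem _ _ hb, ?_⟩
    rw [← smul_add]
    have hzz : (z - Complex.I • Jc' z) + (z + Complex.I • Jc' z) = (2:ℂ) • z := by
      rw [two_smul]
      abel
    rw [hzz, smul_smul]
    norm_num
  have hPP' : P = P' := by
    apply le_antisymm ?_ hP'le
    intro p hp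
    obtain ⟨a, haP', b, hbN', rfl⟩ := hsup' p
    have hbP : b ∈ P := by
      have haP : a ∈ P := hP'le haP'
      have : (a + b) - a ∈ P := Submodule.sub_mem _ hp haP
      simpa using this
    have hbbot : b = 0 := by
      have := (disjoint_pos_neg T).le_bot ⟨hbP, hN'le hbN'⟩
      simpa using this
    rw [hbbot, add_zero]
    exact haP'
  have hNN' : N = N' := by
    apply le_antisymm ?_ hN'le
    intro n hn
    obtain ⟨a, haP', b, hbN', rfl⟩ := hsup' n
    have haN : a ∈ N := by
      have hbN : b ∈ N := hN'le hbN'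
      have : (a + b) - b ∈ N := Submodule.sub_mem _ hn hbN
      simpa using this
    have habot : a = 0 := by
      have := (disjoint_pos_neg T).le_bot ⟨hP'le haP', haN⟩
      simpa using this
    rw [habot, zero_add]
    exact hbN'
  have hJcJc' : ∀ z, Jc' z = Jc z := by
    intro z
    obtain ⟨p, hp, n, hn, rfl⟩ := decomp z
    rw [map_add, map_add, (hmemP' p).mp (hPP' ▸ hp), (hmemN' n).mp (hNN' ▸ hn), hJcdef,
      Jof_apply_left P N hc hp, Jof_apply_right P N hc hn]
  apply LinearMap.ext
  intro v
  apply one_tmul_injective (V := V)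
  show (1:ℂ) ⊗ₜ[ℝ] (J' v) = (1:ℂ) ⊗ₜ[ℝ] (J v)
  rw [hJv]
  have hbt : Jc' ((1:ℂ) ⊗ₜ[ℝ] v) = (1:ℂ) ⊗ₜ[ℝ] (J' v) := by simp [hJc'def]
  rw [← hbt, hJcJc']
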